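/- Let s be a homeomorphism of a compact metric space X with a continuous bounded linear cocycle A, let μ be an s-invariant measure, and let t be a homeomorphism commuting with s. If μ' is a weak-* limit of the Cesàro averages (1/m)∑_{j=0}^{m-1} (t^j)_*μ, then μ' is s-invariant and λ₊(s, μ', A) ≥ λ₊(s, μ, A). -/

import Mathlib

open MeasureTheory Filter

/-- If `μ'` is a weak-* limit of the Cesàro averages `(1/m) ∑_{j<m} (t^j)⋆μ` of an
`s`-invariant measure `μ`, where `s, t` are commuting homeomorphisms carrying a continuous
bounded linear cocycle `A`, then `μ'` is `s`-invariant and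
`λ₊(s, μ', A) ≥ λ₊(s, μ, A)`. -/
theorem stmt3 {X : Type*} [MetricSpace X] [CompactSpace X] [MeasurableSpace X] [BorelSpace X]
    {G : Type*} [CommGroup G] [MulAction G X]
    (hGcont : ∀ g : G, Continuous fun x : X => g • x)
    (d : ℕ) (A : G → X → ((Fin d → ℝ) ≃L[ℝ] (Fin d → ℝ)))
    (hAcont : ∀ g, Continuous fun x => (A g x : (Fin d → ℝ) →L[ℝ] (Fin d → ℝ)))
    (hcoc : ∀ (g h : G) (x : X),
      (A (g * h) x : (Fin d → ℝ) →L[ℝ] (Fin d → ℝ)) =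
        ((A g (h • x) : (Fin d → ℝ) →L[ℝ] (Fin d → ℝ))).comp
          (A h x : (Fin d → ℝ) →L[ℝ] (Fin d → ℝ)))
    (s t : G) (μ : Measure X) [IsProbabilityMeasure μ]
    (hμ : μ.map (fun x => s • x) = μ)
    (ν : ℕ → ProbabilityMeasure X)
    (hν : ∀ m : ℕ, (ν m : Measure X) =
      (((m + 1 : ℕ) : ENNReal))⁻¹ •
        ∑ j ∈ Finset.range (m + 1), μ.map (fun x => t ^ j • x))
    (μ' : ProbabilityMeasure X)
    (hlim : Tendsto ν atTop (nhds μ')) :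
    (μ' : Measure X).map (fun x => s • x) = (μ' : Measure X) ∧
      (⨅ n : ℕ, (1 / (n + 1 : ℝ)) *
          ∫ x, Real.log ‖(A (s ^ (n + 1)) x : (Fin d → ℝ) →L[ℝ] (Fin d → ℝ))‖ ∂μ) ≤
        ⨅ n : ℕ, (1 / (n + 1 : ℝ)) *
          ∫ x, Real.log ‖(A (s ^ (n + 1)) x : (Fin d → ℝ) →L[ℝ] (Fin d → ℝ))‖
            ∂(μ' : Measure X) := by
  -- basic measurability of the group action maps
  have hMcont : ∀ g : G, Continuous fun x : X => g • x := hGcont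
  have hMmeas : ∀ g : G, Measurable fun x : X => g • x := fun g => (hMcont g).measurable
  -- pushforward by commuting elements
  have hmapmap : ∀ (g h : G) (ρ : Measure X),
      (ρ.map (fun x => h • x)).map (fun x => g • x) = ρ.map (fun x => (g * h) • x) := by
    intro g h ρ
    rw [Measure.map_map (hMmeas g) (hMmeas h)]
    congr 1
    funext x
    simp [Function.comp, smul_smul]
  -- μ is invariant under s^k
  have hμk : ∀ k : ℕ, μ.map (fun x => s ^ k • x) = μ := by
    intro k
    induction k with
    | zero => simp [Measure.map_id]
    | succ k ih =>
      have : (fun x : X => s ^ (k+1) • x) = (fun x => s ^ k • x) ∘ (fun x => s • x) := by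
        funext x; simp [Function.comp, smul_smul, pow_succ, mul_comm]
      rw [this, ← Measure.map_map (hMmeas (s ^ k)) (hMmeas s), hμ, ih]
  -- each ρ_j := (t^j)_* μ is invariant under s^k
  have hρS : ∀ (j k : ℕ),
      (μ.map (fun x => t ^ j • x)).map (fun x => s ^ k • x) = μ.map (fun x => t ^ j • x) := by
    intro j k
    rw [hmapmap, mul_comm, ← hmapmap, hμk]
  -- part 1 : invariance of μ'
  have hνinv : ∀ m, ((ν m : Measure X)).map (fun x => s • x) = (ν m : Measure X) := by
    intro m
    rw [hν]
    rw [Measure.map_smul]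
    congr 1
    have hsum : ((∑ j ∈ Finset.range (m + 1), μ.map fun x => t ^ j • x) : Measure X).map
        (fun x => s • x) = ∑ j ∈ Finset.range (m + 1),
          (μ.map fun x => t ^ j • x).map (fun x => s • x) := by
      ext E hE
      simp only [Measure.map_apply (hMmeas s) hE, Measure.finset_sum_apply]
    rw [hsum]
    exact Finset.sum_congr rfl fun j _ => by
      have := hρS j 1; rw [pow_one] at this; exact this
  have hpart1 : (μ' : Measure X).map (fun x => s • x) = (μ' : Measure X) := by
    have hmapcont := ProbabilityMeasure.tendsto_map_of_tendsto_of_continuous ν μ' hlim (hMcont s)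
    have heq : (fun m => (ν m).map (hMcont s).measurable.aemeasurable) = ν := by
      funext m
      apply ProbabilityMeasure.toMeasure_injective
      rw [ProbabilityMeasure.toMeasure_map]
      exact hνinv m
    rw [heq] at hmapcont
    have := tendsto_nhds_unique hmapcont hlim
    calc (μ' : Measure X).map (fun x => s • x)
        = ((μ'.map (hMcont s).measurable.aemeasurable : ProbabilityMeasure X) : Measure X) := rfl
      _ = (μ' : Measure X) := by rw [this]
  refine ⟨hpart1, ?_⟩
  -- Part 2.
  rcases Nat.eq_zero_or_pos d with rfl | hd
  · -- trivial case d = 0 : everything is the zero map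
    have hz : ∀ (g : G) (x : X), (A g x : (Fin 0 → ℝ) →L[ℝ] (Fin 0 → ℝ)) = 0 := by
      intro g x
      ext v i
      exact i.elim0
    simp [hz]
  -- now d > 0
  haveI : Nonempty (Fin d) := ⟨⟨0, hd⟩⟩
  set N : G → X → ℝ := fun g x => ‖(A g x : (Fin d → ℝ) →L[ℝ] (Fin d → ℝ))‖ with hN
  set F : G → X → ℝ := fun g x => Real.log (N g x) with hF
  have hNpos : ∀ g x, 0 < N g x := by
    intro g x
    obtain ⟨v, hv⟩ := exists_ne (0 : Fin d → ℝ)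
    refine norm_pos_iff.mpr fun h0 => hv ?_
    have : (A g x : (Fin d → ℝ) →L[ℝ] (Fin d → ℝ)) v = 0 := by rw [h0]; rfl
    have h2 : A g x v = A g x 0 := by simpa using this
    exact (A g x).injective h2
  have hNcont : ∀ g, Continuous (N g) := fun g => (hAcont g).norm
  have hFcont : ∀ g, Continuous (F g) := by
    intro g
    rw [continuous_iff_continuousAt]
    intro x
    exact (Real.continuousAt_log (ne_of_gt (hNpos g x))).comp (hNcont g).continuousAt
  have hFint : ∀ (g : G) (ρ : Measure X), IsFiniteMeasure ρ → Integrable (F g) ρ := by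
    intro g ρ hρ
    exact (hFcont g).integrable_of_hasCompactSupport ((isClosed_tsupport _).isCompact)
  -- submultiplicativity of N
  have hNsub : ∀ (g h : G) (x : X), N (g * h) x ≤ N g (h • x) * N h x := by
    intro g h x
    rw [hN]
    simp only
    rw [hcoc g h x]
    exact ContinuousLinearMap.opNorm_comp_le _ _
  -- subadditivity of F
  have hFsub : ∀ (g h : G) (x : X), F (g * h) x ≤ F g (h • x) + F h x := by
    intro g h x
    have h1 := hNsub g h x
    calc F (g * h) x ≤ Real.log (N g (h • x) * N h x) :=
          Real.log_le_log (hNpos _ _) h1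
      _ = F g (h • x) + F h x :=
          Real.log_mul (ne_of_gt (hNpos _ _)) (ne_of_gt (hNpos _ _))
  -- A 1 x is the identity
  have hA1 : ∀ x : X, N 1 x = 1 := by
    intro x
    have h := hcoc 1 1 x
    rw [one_mul, one_smul] at h
    have hid : (A 1 x : (Fin d → ℝ) →L[ℝ] (Fin d → ℝ)) = ContinuousLinearMap.id ℝ _ := by
      refine ContinuousLinearMap.ext fun v => ?_
      have hv : A 1 x v = A 1 x (A 1 x v) := by
        have := congrArg (fun (f : (Fin d → ℝ) →L[ℝ] (Fin d → ℝ)) => f v) h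
        simpa using this
      have h2 := (A 1 x).injective hv.symm
      simpa using h2
    rw [hN]
    simp only
    rw [hid]
    exact ContinuousLinearMap.norm_id
  have hF1 : ∀ x : X, F 1 x = 0 := by
    intro x; rw [hF]; simp only; rw [hA1 x, Real.log_one]
  -- X is nonempty
  have hXne : Nonempty X := by
    by_contra h
    haveI := not_nonempty_iff.mp h
    have h1 : μ Set.univ = 1 := measure_univ
    rw [Set.univ_eq_empty_iff.mpr this, measure_empty] at h1
    exact zero_ne_one h1
  haveI := hXne
  -- sup bounds for N g
  have hK : ∀ g : G, ∃ x₀ : X, ∀ x, N g x ≤ N g x₀ := by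
    intro g
    obtain ⟨x₀, -, h⟩ := IsCompact.exists_isMaxOn isCompact_univ
      Set.univ_nonempty (hNcont g).continuousOn
    exact ⟨x₀, fun x => isMaxOn_iff.mp h x (Set.mem_univ x)⟩
  -- power bound
  have hNpow : ∀ (g : G) (x₀ : X), (∀ x, N g x ≤ N g x₀) →
      ∀ (k : ℕ) (x : X), N (g ^ k) x ≤ (N g x₀) ^ k := by
    intro g x₀ hx₀ k
    induction k with
    | zero => intro x; simp [pow_zero, hA1 x]
    | succ k ih =>
      intro x
      calc N (g ^ (k+1)) x = N (g ^ k * g) x := by rw [pow_succ]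
        _ ≤ N (g ^ k) (g • x) * N g x := hNsub _ _ _
        _ ≤ (N g x₀) ^ k * N g x₀ :=
            mul_le_mul (ih _) (hx₀ x) (le_of_lt (hNpos _ _)) (pow_nonneg (norm_nonneg _) k)
        _ = (N g x₀) ^ (k+1) := (pow_succ _ _).symm
  -- change of variables
  have hco : ∀ (φ : X → ℝ), Continuous φ → ∀ (g : G) (ρ : Measure X),
      ∫ x, φ x ∂(ρ.map (fun x => g • x)) = ∫ x, φ (g • x) ∂ρ := by
    intro φ hφ g ρ
    exact integral_map (hMmeas g).aemeasurable hφ.aestronglyMeasurable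
  set a : ℕ → ℝ := fun n => ∫ x, F (s ^ n) x ∂μ with ha
  set b : ℕ → ℕ → ℝ := fun j n => ∫ x, F (s ^ n) x ∂(μ.map (fun x => t ^ j • x)) with hb
  have hρprob : ∀ j : ℕ, IsProbabilityMeasure (μ.map (fun x => t ^ j • x)) :=
    fun j => Measure.isProbabilityMeasure_map (hMmeas (t ^ j)).aemeasurable
  -- subadditivity of b j
  have hbsub : ∀ j n k, b j (n + k) ≤ b j n + b j k := by
    intro j n k
    haveI := hρprob j
    have h1 : ∀ x, F (s ^ (n + k)) x ≤ F (s ^ n) (s ^ k • x) + F (s ^ k) x := by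
      intro x
      have := hFsub (s ^ n) (s ^ k) x
      rwa [← pow_add] at this
    have hint1 : Integrable (fun x => F (s ^ n) (s ^ k • x)) (μ.map (fun x => t ^ j • x)) :=
      ((hFcont (s ^ n)).comp (hMcont (s ^ k))).integrable_of_hasCompactSupport
        ((isClosed_tsupport _).isCompact)
    have hint2 : Integrable (F (s ^ k)) (μ.map (fun x => t ^ j • x)) :=
      hFint _ _ inferInstance
    calc b j (n + k) ≤ ∫ x, (F (s ^ n) (s ^ k • x) + F (s ^ k) x)
            ∂(μ.map (fun x => t ^ j • x)) :=
          integral_mono (hFint _ _ inferInstance) (hint1.add hint2) h1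
      _ = (∫ x, F (s ^ n) (s ^ k • x) ∂(μ.map (fun x => t ^ j • x))) + b j k :=
          integral_add hint1 hint2
      _ = b j n + b j k := by
          rw [← hco (F (s ^ n)) (hFcont _) (s ^ k) (μ.map (fun x => t ^ j • x)), hρS j k]
  have hb0 : ∀ j, b j 0 = 0 := by
    intro j
    have : (fun x => F (s ^ 0) x) = fun _ : X => (0:ℝ) := by
      funext x; rw [pow_zero]; exact hF1 x
    rw [hb]
    simp only [this, integral_zero]
  have hbq : ∀ j n q, b j (q * (n + 1)) ≤ q * b j (n + 1) := by
    intro j n q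
    induction q with
    | zero => simp [hb0]
    | succ q ih =>
      have he : (q + 1) * (n + 1) = q * (n + 1) + (n + 1) := by ring
      rw [he]
      calc b j (q * (n+1) + (n+1)) ≤ b j (q * (n+1)) + b j (n+1) := hbsub _ _ _
        _ ≤ q * b j (n+1) + b j (n+1) := by linarith
        _ = ((q+1 : ℕ) : ℝ) * b j (n+1) := by push_cast; ring
  -- comparison between a and b j
  have hC : ∀ j : ℕ, ∃ C : ℝ, ∀ n, a n ≤ b j n + C := by
    intro j
    obtain ⟨y₁, h₁⟩ := hK ((t ^ j)⁻¹)
    obtain ⟨y₂, h₂⟩ := hK (t ^ j)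
    refine ⟨Real.log (N ((t ^ j)⁻¹) y₁) + Real.log (N (t ^ j) y₂), fun n => ?_⟩
    have hpt : ∀ x, F (s ^ n) x ≤ F (s ^ n) (t ^ j • x) +
        (Real.log (N ((t ^ j)⁻¹) y₁) + Real.log (N (t ^ j) y₂)) := by
      intro x
      have e1 : N (s ^ n) x ≤ N ((t ^ j)⁻¹) ((s ^ n * t ^ j) • x) * N (s ^ n * t ^ j) x := by
        have h := hNsub ((t ^ j)⁻¹) (s ^ n * t ^ j) x
        rwa [show (t ^ j)⁻¹ * (s ^ n * t ^ j) = s ^ n by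
          rw [mul_comm (s ^ n) (t ^ j), ← mul_assoc, inv_mul_cancel, one_mul]] at h
      have e3 : N (s ^ n) x ≤ N ((t ^ j)⁻¹) y₁ * (N (s ^ n) (t ^ j • x) * N (t ^ j) y₂) := by
        calc N (s ^ n) x ≤ N ((t ^ j)⁻¹) ((s ^ n * t ^ j) • x) * N (s ^ n * t ^ j) x := e1
          _ ≤ N ((t ^ j)⁻¹) y₁ * (N (s ^ n) (t ^ j • x) * N (t ^ j) y₂) := by
              refine mul_le_mul (h₁ _) ?_ (le_of_lt (hNpos _ _)) (le_of_lt (hNpos _ _))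
              calc N (s ^ n * t ^ j) x ≤ N (s ^ n) (t ^ j • x) * N (t ^ j) x := hNsub _ _ _
                _ ≤ N (s ^ n) (t ^ j • x) * N (t ^ j) y₂ :=
                    mul_le_mul_of_nonneg_left (h₂ x) (le_of_lt (hNpos _ _))
      have e4 : F (s ^ n) x ≤ Real.log (N ((t ^ j)⁻¹) y₁) +
          (Real.log (N (s ^ n) (t ^ j • x)) + Real.log (N (t ^ j) y₂)) := by
        calc F (s ^ n) x ≤ Real.log (N ((t ^ j)⁻¹) y₁ *
              (N (s ^ n) (t ^ j • x) * N (t ^ j) y₂)) := Real.log_le_log (hNpos _ _) e3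
          _ = _ := by
              rw [Real.log_mul (ne_of_gt (hNpos _ _))
                  (ne_of_gt (mul_pos (hNpos _ _) (hNpos _ _))),
                Real.log_mul (ne_of_gt (hNpos _ _)) (ne_of_gt (hNpos _ _))]
      have : F (s ^ n) (t ^ j • x) = Real.log (N (s ^ n) (t ^ j • x)) := rfl
      linarith [e4]
    have hint1 : Integrable (fun x => F (s ^ n) (t ^ j • x)) μ :=
      ((hFcont (s ^ n)).comp (hMcont (t ^ j))).integrable_of_hasCompactSupport
        ((isClosed_tsupport _).isCompact)
    have hbeq : b j n = ∫ x, F (s ^ n) (t ^ j • x) ∂μ := hco (F (s ^ n)) (hFcont _) (t ^ j) μ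
    calc a n ≤ ∫ x, (F (s ^ n) (t ^ j • x) +
          (Real.log (N ((t ^ j)⁻¹) y₁) + Real.log (N (t ^ j) y₂))) ∂μ :=
        integral_mono (hFint _ _ inferInstance) (hint1.add (integrable_const _)) hpt
      _ = (∫ x, F (s ^ n) (t ^ j • x) ∂μ) +
          (Real.log (N ((t ^ j)⁻¹) y₁) + Real.log (N (t ^ j) y₂)) := by
        rw [integral_add hint1 (integrable_const _), integral_const]
        simp [measure_univ]
      _ = b j n + (Real.log (N ((t ^ j)⁻¹) y₁) + Real.log (N (t ^ j) y₂)) := by rw [hbeq]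
  -- uniform lower bound for F (s ^ k)
  obtain ⟨ys, hys⟩ := hK s⁻¹
  have hKspos : 0 < N s⁻¹ ys := hNpos _ _
  have hFlow : ∀ (k : ℕ) (x : X), -((k : ℝ) * Real.log (N s⁻¹ ys)) ≤ F (s ^ k) x := by
    intro k x
    have hkpos : 0 < (N s⁻¹ ys) ^ k := pow_pos hKspos k
    have e1 : (1:ℝ) ≤ N ((s ^ k)⁻¹) (s ^ k • x) * N (s ^ k) x := by
      have h := hNsub ((s ^ k)⁻¹) (s ^ k) x
      rw [inv_mul_cancel] at h
      rw [hA1 x] at h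
      exact h
    have e2 : N ((s ^ k)⁻¹) (s ^ k • x) ≤ (N s⁻¹ ys) ^ k := by
      rw [← inv_pow]
      exact hNpow s⁻¹ ys hys k _
    have e3 : ((N s⁻¹ ys) ^ k)⁻¹ ≤ N (s ^ k) x := by
      have h4 : (1:ℝ) ≤ (N s⁻¹ ys) ^ k * N (s ^ k) x :=
        le_trans e1 (mul_le_mul_of_nonneg_right e2 (le_of_lt (hNpos _ _)))
      rw [inv_eq_one_div, div_le_iff₀ hkpos]
      linarith [h4]
    calc -((k : ℝ) * Real.log (N s⁻¹ ys)) = Real.log (((N s⁻¹ ys) ^ k)⁻¹) := by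
          rw [Real.log_inv, Real.log_pow]
      _ ≤ F (s ^ k) x := Real.log_le_log (inv_pos.mpr hkpos) e3
  -- bounded below
  have hbdd : BddBelow (Set.range fun n : ℕ => (1 / (n + 1 : ℝ)) * a (n + 1)) := by
    refine ⟨-(Real.log (N s⁻¹ ys)), ?_⟩
    rintro z ⟨n, rfl⟩
    simp only
    have hpos : (0:ℝ) < (n : ℝ) + 1 := by positivity
    have h1 : -(((n : ℝ) + 1) * Real.log (N s⁻¹ ys)) ≤ a (n + 1) := by
      have hmono : ∫ _x, (-(((n:ℝ) + 1) * Real.log (N s⁻¹ ys))) ∂μ ≤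
          ∫ x, F (s ^ (n+1)) x ∂μ := by
        refine integral_mono (integrable_const _) (hFint _ _ inferInstance) fun x => ?_
        have := hFlow (n+1) x
        push_cast at this
        exact this
      simpa [measure_univ] using hmono
    have h2 := mul_le_mul_of_nonneg_left h1 (le_of_lt (one_div_pos.mpr hpos))
    calc -(Real.log (N s⁻¹ ys))
        = (1/((n:ℝ)+1)) * (-(((n:ℝ)+1) * Real.log (N s⁻¹ ys))) := by field_simp
      _ ≤ (1/((n:ℝ)+1)) * a (n+1) := h2
  set lam : ℝ := ⨅ n : ℕ, (1 / (n + 1 : ℝ)) * a (n + 1) with hlam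
  have hlam_le : ∀ k : ℕ, lam ≤ (1 / ((k : ℝ) + 1)) * a (k + 1) := fun k => ciInf_le hbdd k
  have hlam_le' : ∀ q : ℕ, 1 ≤ q → lam ≤ (1 / (q : ℝ)) * a q := by
    intro q hq
    obtain ⟨k, rfl⟩ := Nat.exists_eq_add_of_le hq
    have := hlam_le k
    have hcast : ((1 + k : ℕ) : ℝ) = (k : ℝ) + 1 := by push_cast; ring
    rw [hcast]
    rwa [show 1 + k = k + 1 from by ring] 
  -- key : lam ≤ (1/(n+1)) * b j (n+1)
  have hkey : ∀ j n : ℕ, lam ≤ (1 / ((n : ℝ) + 1)) * b j (n + 1) := by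
    intro j n
    obtain ⟨C, hC'⟩ := hC j
    have hstep : ∀ q : ℕ, 1 ≤ q →
        lam ≤ (1/((n:ℝ)+1)) * b j (n+1) + C / ((q : ℝ) * ((n:ℝ)+1)) := by
      intro q hq
      have hq1 : 1 ≤ q * (n + 1) := Nat.one_le_iff_ne_zero.mpr
        (Nat.mul_ne_zero (Nat.one_le_iff_ne_zero.mp hq) (Nat.succ_ne_zero n))
      have h1 := hlam_le' (q * (n + 1)) hq1
      have hqpos : (0:ℝ) < (q : ℝ) := by exact_mod_cast hq
      have hnpos : (0:ℝ) < (n : ℝ) + 1 := by positivity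
      have hqn : (0:ℝ) < ((q * (n + 1) : ℕ) : ℝ) := by positivity
      have h2 : a (q * (n + 1)) ≤ (q : ℝ) * b j (n + 1) + C :=
        le_trans (hC' _) (by linarith [hbq j n q])
      have h3 : lam ≤ (1 / ((q * (n + 1) : ℕ) : ℝ)) * ((q : ℝ) * b j (n + 1) + C) :=
        le_trans h1 (mul_le_mul_of_nonneg_left h2 (le_of_lt (one_div_pos.mpr hqn)))
      have hcast : ((q * (n + 1) : ℕ) : ℝ) = (q : ℝ) * ((n : ℝ) + 1) := by push_cast; ring
      rw [hcast] at h3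
      calc lam ≤ (1 / ((q : ℝ) * ((n:ℝ)+1))) * ((q : ℝ) * b j (n + 1) + C) := h3
        _ = (1/((n:ℝ)+1)) * b j (n+1) + C / ((q : ℝ) * ((n:ℝ)+1)) := by
            field_simp
    have htends : Tendsto (fun q : ℕ => (1/((n:ℝ)+1)) * b j (n+1) + C / ((q : ℝ) * ((n:ℝ)+1)))
        atTop (nhds ((1/((n:ℝ)+1)) * b j (n+1) + 0)) := by
      refine Tendsto.add tendsto_const_nhds ?_
      refine Tendsto.div_atTop tendsto_const_nhds ?_
      exact (tendsto_natCast_atTop_atTop).atTop_mul_const (by positivity)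
    have := ge_of_tendsto htends (eventually_atTop.mpr ⟨1, fun q hq => hstep q hq⟩)
    simpa using this
  -- the averaged measures satisfy the same bound
  have hνbound : ∀ n m : ℕ,
      ((n : ℝ) + 1) * lam ≤ ∫ x, F (s ^ (n + 1)) x ∂(ν m : Measure X) := by
    intro n m
    have hnpos : (0:ℝ) < (n : ℝ) + 1 := by positivity
    have hmpos : (0:ℝ) < (m : ℝ) + 1 := by positivity
    have hint : ∀ j ∈ Finset.range (m+1),
        Integrable (F (s ^ (n+1))) (μ.map (fun x => t ^ j • x)) := by
      intro j _
      haveI := hρprob j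
      exact hFint _ _ inferInstance
    have hrw : ∫ x, F (s ^ (n + 1)) x ∂(ν m : Measure X) =
        (1/((m:ℝ)+1)) * ∑ j ∈ Finset.range (m+1), b j (n+1) := by
      rw [hν m, integral_smul_measure, integral_finset_sum_measure hint]
      have htoReal : ((((m + 1 : ℕ)) : ENNReal))⁻¹.toReal = 1/((m:ℝ)+1) := by
        rw [ENNReal.toReal_inv, ENNReal.toReal_natCast]
        rw [one_div]
        norm_cast
      rw [htoReal, smul_eq_mul]
    rw [hrw]
    have hterm : ∀ j ∈ Finset.range (m+1), ((n : ℝ) + 1) * lam ≤ b j (n+1) := by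
      intro j _
      have h := mul_le_mul_of_nonneg_left (hkey j n) (le_of_lt hnpos)
      calc ((n : ℝ) + 1) * lam ≤ ((n:ℝ)+1) * ((1 / ((n : ℝ) + 1)) * b j (n + 1)) := h
        _ = b j (n+1) := by field_simp
    have hsum : ((m:ℝ)+1) * (((n : ℝ) + 1) * lam) ≤ ∑ j ∈ Finset.range (m+1), b j (n+1) := by
      calc ((m:ℝ)+1) * (((n : ℝ) + 1) * lam)
          = ∑ _j ∈ Finset.range (m+1), (((n : ℝ) + 1) * lam) := by
            rw [Finset.sum_const, Finset.card_range, nsmul_eq_mul]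
            push_cast
            ring
        _ ≤ _ := Finset.sum_le_sum hterm
    have := mul_le_mul_of_nonneg_left hsum (le_of_lt (one_div_pos.mpr hmpos))
    calc ((n : ℝ) + 1) * lam
        = (1/((m:ℝ)+1)) * (((m:ℝ)+1) * (((n : ℝ) + 1) * lam)) := by field_simp
      _ ≤ (1/((m:ℝ)+1)) * ∑ j ∈ Finset.range (m+1), b j (n+1) := this
  -- pass to the limit
  have hfinal : ∀ n : ℕ, lam ≤ (1 / ((n : ℝ) + 1)) * ∫ x, F (s ^ (n + 1)) x ∂(μ' : Measure X) := by
    intro n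
    have hnpos : (0:ℝ) < (n : ℝ) + 1 := by positivity
    have hbcf := ProbabilityMeasure.tendsto_iff_forall_integral_tendsto.mp hlim
      (BoundedContinuousFunction.mkOfCompact ⟨F (s ^ (n + 1)), hFcont _⟩)
    simp only [BoundedContinuousFunction.mkOfCompact_apply, ContinuousMap.coe_mk] at hbcf
    have hlimint := ge_of_tendsto hbcf (Eventually.of_forall (hνbound n))
    have h2 := mul_le_mul_of_nonneg_left hlimint (le_of_lt (one_div_pos.mpr hnpos))
    calc lam = (1/((n:ℝ)+1)) * (((n:ℝ)+1) * lam) := by field_simp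
      _ ≤ (1/((n:ℝ)+1)) * ∫ x, F (s ^ (n + 1)) x ∂(μ' : Measure X) := h2
  exact le_ciInf hfinal
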